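/- In the Golub–Kahan bidiagonalization setup, fix k with 1 ≤ k ≤ n−1 and let (θ̃_1^{(k)})² > ⋯ > (θ̃_k^{(k)})² be the singular values of the (k+1)×k matrix M_k obtained by stacking the row α_{k+1}β_{k+1}(e_k^{(k)})ᵀ below B_kᵀB_k, where e_k^{(k)} is the last standard basis vector of ℝ^k, and let θ_1^{(k)} > ⋯ > θ_k^{(k)} be the singular values of B_k. Then for every i with 1 ≤ i ≤ k one has (θ̃_i^{(k)})² < (θ_i^{(k)})² + γ_k^{lsqr} γ_{k−1}^{lsqr}. -/

import Mathlib

open Matrix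

/-- Spectral norm (largest singular value) of a real matrix. -/
noncomputable def specNorm {a b : ℕ} (M : Matrix (Fin a) (Fin b) ℝ) : ℝ :=
  ‖LinearMap.toContinuousLinearMap (Matrix.toEuclideanLin M)‖

/-- The `j`-th largest singular value of a real matrix (`j ≥ 1`), characterized via the
Eckart–Young theorem as the minimal spectral-norm distance to matrices of rank `< j`;
it is `0` when `j` exceeds the smaller dimension. -/
noncomputable def singVal {a b : ℕ} (M : Matrix (Fin a) (Fin b) ℝ) (j : ℕ) : ℝ :=
  sInf {r : ℝ | ∃ D : Matrix (Fin a) (Fin b) ℝ, D.rank < j ∧ r = specNorm (M - D)}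

/-- The matrix of the first `k` columns of `M`. -/
def colSub {a b : ℕ} (M : Matrix (Fin a) (Fin b) ℝ) (k : ℕ) (hk : k ≤ b) :
    Matrix (Fin a) (Fin k) ℝ :=
  M.submatrix id fun j => ⟨j.1, lt_of_lt_of_le j.2 hk⟩

/-- The leading `r × c` submatrix of `M`. -/
def subUL {a b : ℕ} (M : Matrix (Fin a) (Fin b) ℝ) (r c : ℕ) (hr : r ≤ a) (hc : c ≤ b) :
    Matrix (Fin r) (Fin c) ℝ :=
  M.submatrix (fun i => ⟨i.1, lt_of_lt_of_le i.2 hr⟩) (fun j => ⟨j.1, lt_of_lt_of_le j.2 hc⟩)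

lemma specNorm_nonneg {a b : ℕ} (M : Matrix (Fin a) (Fin b) ℝ) : 0 ≤ specNorm M :=
  norm_nonneg _

lemma norm_toEuclideanLin_apply_le {a b : ℕ} (M : Matrix (Fin a) (Fin b) ℝ)
    (x : EuclideanSpace ℝ (Fin b)) :
    ‖Matrix.toEuclideanLin M x‖ ≤ specNorm M * ‖x‖ := by
  simpa [specNorm] using (LinearMap.toContinuousLinearMap (Matrix.toEuclideanLin M)).le_opNorm x

lemma specNorm_le_bound {a b : ℕ} (M : Matrix (Fin a) (Fin b) ℝ) {C : ℝ} (hC : 0 ≤ C)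
    (h : ∀ x : EuclideanSpace ℝ (Fin b), ‖Matrix.toEuclideanLin M x‖ ≤ C * ‖x‖) :
    specNorm M ≤ C :=
  ContinuousLinearMap.opNorm_le_bound _ hC h

lemma specNorm_add_le {a b : ℕ} (M N : Matrix (Fin a) (Fin b) ℝ) :
    specNorm (M + N) ≤ specNorm M + specNorm N := by
  unfold specNorm
  rw [map_add, map_add]
  exact norm_add_le _ _

lemma toEuclideanLin_mul {a b c : ℕ} (M : Matrix (Fin a) (Fin b) ℝ)
    (N : Matrix (Fin b) (Fin c) ℝ) :
    Matrix.toEuclideanLin (M * N) =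
      (Matrix.toEuclideanLin M).comp (Matrix.toEuclideanLin N) := by
  apply LinearMap.ext; intro x
  show _ = Matrix.toEuclideanLin M (Matrix.toEuclideanLin N x)
  rw [Matrix.toEuclideanLin_apply, Matrix.toEuclideanLin_apply, Matrix.toEuclideanLin_apply]
  simp [Matrix.mulVec_mulVec]

lemma singVal_set_nonempty {a b : ℕ} (M : Matrix (Fin a) (Fin b) ℝ) {j : ℕ} (hj : 1 ≤ j) :
    {r : ℝ | ∃ D : Matrix (Fin a) (Fin b) ℝ, D.rank < j ∧ r = specNorm (M - D)}.Nonempty :=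
  ⟨specNorm M, 0, by simpa using (show 0 < j by omega), by simp⟩

lemma singVal_set_bddBelow {a b : ℕ} (M : Matrix (Fin a) (Fin b) ℝ) (j : ℕ) :
    BddBelow {r : ℝ | ∃ D : Matrix (Fin a) (Fin b) ℝ, D.rank < j ∧ r = specNorm (M - D)} := by
  refine ⟨0, fun r hr => ?_⟩
  obtain ⟨D, -, rfl⟩ := hr
  exact specNorm_nonneg _

lemma singVal_le {a b : ℕ} (M D : Matrix (Fin a) (Fin b) ℝ) {j : ℕ} (hD : D.rank < j) :
    singVal M j ≤ specNorm (M - D) :=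
  csInf_le (singVal_set_bddBelow M j) ⟨D, hD, rfl⟩

lemma le_singVal {a b : ℕ} (M : Matrix (Fin a) (Fin b) ℝ) {j : ℕ} (hj : 1 ≤ j) {c : ℝ}
    (h : ∀ D : Matrix (Fin a) (Fin b) ℝ, D.rank < j → c ≤ specNorm (M - D)) :
    c ≤ singVal M j := by
  refine le_csInf (singVal_set_nonempty M hj) ?_
  rintro r ⟨D, hD, rfl⟩
  exact h D hD

/-- Weyl-type perturbation bound. -/
lemma singVal_add_le {a b : ℕ} (X E : Matrix (Fin a) (Fin b) ℝ) {j : ℕ} (hj : 1 ≤ j) :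
    singVal (X + E) j ≤ singVal X j + specNorm E := by
  rw [← sub_le_iff_le_add]
  refine le_csInf (singVal_set_nonempty X hj) ?_
  rintro r ⟨D, hD, rfl⟩
  rw [sub_le_iff_le_add]
  calc singVal (X + E) j ≤ specNorm (X + E - D) := singVal_le _ D hD
    _ ≤ specNorm (X - D) + specNorm E := by
        have : X + E - D = (X - D) + E := by abel
        rw [this]; exact specNorm_add_le _ _

lemma singVal_nonneg {a b : ℕ} (M : Matrix (Fin a) (Fin b) ℝ) {j : ℕ} (hj : 1 ≤ j) :
    0 ≤ singVal M j :=
  le_singVal M hj fun D _ => specNorm_nonneg _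

lemma toEuclideanLin_apply_coord {a b : ℕ} (M : Matrix (Fin a) (Fin b) ℝ)
    (x : EuclideanSpace ℝ (Fin b)) (i : Fin a) :
    (Matrix.toEuclideanLin M x) i = M.mulVec (fun j => x j) i := by
  simp [Matrix.toEuclideanLin_apply]

lemma sq_norm_euclid {a : ℕ} (x : EuclideanSpace ℝ (Fin a)) :
    ‖x‖ ^ 2 = ∑ i, x i ^ 2 := by
  rw [EuclideanSpace.norm_eq, Real.sq_sqrt]
  · simp [sq_abs]
  · positivity

lemma inner_euclid {a : ℕ} (x y : EuclideanSpace ℝ (Fin a)) :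
    (inner ℝ x y : ℝ) = ∑ i, x i * y i := by
  simp [PiLp.inner_apply, mul_comm]

lemma sq_norm_toEuclideanLin {a b : ℕ} (M : Matrix (Fin a) (Fin b) ℝ)
    (x : EuclideanSpace ℝ (Fin b)) :
    ‖Matrix.toEuclideanLin M x‖ ^ 2 = ∑ i, (M.mulVec (fun j => x j) i) ^ 2 := by
  rw [sq_norm_euclid]
  simp [toEuclideanLin_apply_coord]

lemma real_conjTranspose_eq {a b : ℕ} (M : Matrix (Fin a) (Fin b) ℝ) : Mᴴ = Mᵀ := by
  ext i j; simp [Matrix.conjTranspose_apply]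

lemma inner_toEuclideanLin_mul {a b : ℕ} (M : Matrix (Fin a) (Fin b) ℝ)
    (x y : EuclideanSpace ℝ (Fin b)) :
    (inner ℝ (Matrix.toEuclideanLin M x) (Matrix.toEuclideanLin M y) : ℝ)
      = inner ℝ (Matrix.toEuclideanLin (Mᵀ * M) x) y := by
  rw [toEuclideanLin_mul]
  rw [← real_conjTranspose_eq, Matrix.toEuclideanLin_conjTranspose_eq_adjoint]
  exact (LinearMap.adjoint_inner_left (Matrix.toEuclideanLin M) _ _).symm

lemma norm_toEuclideanLin_of_orthonormal {a b : ℕ} {J : Matrix (Fin a) (Fin b) ℝ}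
    (hJ : Jᵀ * J = 1) (x : EuclideanSpace ℝ (Fin b)) :
    ‖Matrix.toEuclideanLin J x‖ = ‖x‖ := by
  have h := inner_toEuclideanLin_mul J x x
  rw [hJ] at h
  have h1 : Matrix.toEuclideanLin (1 : Matrix (Fin b) (Fin b) ℝ) x = x := by
    apply PiLp.ext; intro i
    rw [toEuclideanLin_apply_coord]
    simp [Matrix.one_mulVec]
  rw [h1, real_inner_self_eq_norm_sq, real_inner_self_eq_norm_sq] at h
  have := sq_nonneg ‖x‖
  nlinarith [norm_nonneg (Matrix.toEuclideanLin J x), norm_nonneg x]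

lemma specNorm_mul_le_of_orthonormal {a b c : ℕ} {J : Matrix (Fin a) (Fin b) ℝ}
    (hJ : Jᵀ * J = 1) (X : Matrix (Fin b) (Fin c) ℝ) :
    specNorm (J * X) ≤ specNorm X := by
  refine specNorm_le_bound _ (specNorm_nonneg X) fun x => ?_
  rw [toEuclideanLin_mul]
  simpa [norm_toEuclideanLin_of_orthonormal hJ] using norm_toEuclideanLin_apply_le X x

lemma le_of_sq_le_sq' {x y : ℝ} (hy : 0 ≤ y) (h : x ^ 2 ≤ y ^ 2) : x ≤ y := by
  nlinarith [le_abs_self x, abs_nonneg x, sq_abs x]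

lemma singVal_mul_le_of_orthonormal {a b c : ℕ} {J : Matrix (Fin a) (Fin b) ℝ}
    (hJ : Jᵀ * J = 1) (G : Matrix (Fin b) (Fin c) ℝ) {j : ℕ} (hj : 1 ≤ j) :
    singVal (J * G) j ≤ singVal G j := by
  refine le_csInf (singVal_set_nonempty G hj) ?_
  rintro r ⟨D, hD, rfl⟩
  calc singVal (J * G) j ≤ specNorm (J * G - J * D) :=
        singVal_le _ _ (lt_of_le_of_lt (Matrix.rank_mul_le_right J D) hD)
    _ ≤ specNorm (G - D) := by
        rw [← Matrix.mul_sub]; exact specNorm_mul_le_of_orthonormal hJ _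

lemma specNorm_diagonal_le {b : ℕ} (e : Fin b → ℝ) {t : ℝ} (ht : 0 ≤ t)
    (he : ∀ l, |e l| ≤ t) : specNorm (Matrix.diagonal e) ≤ t := by
  refine specNorm_le_bound _ ht fun x => ?_
  refine le_of_sq_le_sq' (by positivity) ?_
  rw [sq_norm_toEuclideanLin, mul_pow, sq_norm_euclid]
  rw [Finset.mul_sum]
  refine Finset.sum_le_sum fun i _ => ?_
  rw [Matrix.mulVec_diagonal]
  have h1 : |e i| ^ 2 ≤ t ^ 2 := by
    have := he i; have := abs_nonneg (e i); nlinarith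
  calc (e i * x i) ^ 2 = |e i| ^ 2 * x i ^ 2 := by rw [mul_pow, sq_abs]
    _ ≤ t ^ 2 * x i ^ 2 := by nlinarith [sq_nonneg (x i)]

lemma specNorm_conj_diag_le {b : ℕ} {V : Matrix (Fin b) (Fin b) ℝ}
    (hV : Vᵀ * V = 1) (hV2 : V * Vᵀ = 1) (e : Fin b → ℝ) {t : ℝ} (ht : 0 ≤ t)
    (he : ∀ l, |e l| ≤ t) : specNorm (V * Matrix.diagonal e * Vᵀ) ≤ t := by
  refine specNorm_le_bound _ ht fun x => ?_
  rw [toEuclideanLin_mul, toEuclideanLin_mul]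
  simp only [LinearMap.comp_apply]
  rw [norm_toEuclideanLin_of_orthonormal hV]
  have h2 : ‖Matrix.toEuclideanLin Vᵀ x‖ = ‖x‖ := by
    refine norm_toEuclideanLin_of_orthonormal ?_ x
    rwa [Matrix.transpose_transpose]
  calc ‖Matrix.toEuclideanLin (Matrix.diagonal e) (Matrix.toEuclideanLin Vᵀ x)‖
      ≤ specNorm (Matrix.diagonal e) * ‖Matrix.toEuclideanLin Vᵀ x‖ :=
        norm_toEuclideanLin_apply_le _ _
    _ ≤ t * ‖x‖ := by
        rw [h2]
        exact mul_le_mul_of_nonneg_right (specNorm_diagonal_le e ht he) (norm_nonneg x)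

lemma specNorm_single_entry_le {a b : ℕ} (i0 : Fin a) (j0 : Fin b) (c : ℝ) :
    specNorm (Matrix.of fun i j => if i = i0 ∧ j = j0 then c else 0) ≤ |c| := by
  refine specNorm_le_bound _ (abs_nonneg c) fun x => ?_
  refine le_of_sq_le_sq' (by positivity) ?_
  rw [sq_norm_toEuclideanLin, mul_pow, sq_abs, sq_norm_euclid]
  have hrow : ∀ i : Fin a,
      (Matrix.of fun i j => if i = i0 ∧ j = j0 then c else 0).mulVec (fun j => x j) i
        = if i = i0 then c * x j0 else 0 := by
    intro i
    rw [Matrix.mulVec, dotProduct]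
    by_cases hi : i = i0
    · subst hi
      simp only [Matrix.of_apply, true_and]
      rw [Finset.sum_eq_single j0]
      · simp
      · intro j _ hj; simp [hj]
      · simp
    · simp [hi]
  simp_rw [hrow]
  have hsq : ∀ i : Fin a, (if i = i0 then c * x j0 else 0) ^ 2
      = if i = i0 then (c * x j0) ^ 2 else 0 := by
    intro i; by_cases hi : i = i0 <;> simp [hi]
  simp_rw [hsq]
  rw [Finset.sum_ite_eq' Finset.univ i0 (fun _ => (c * x j0)^2)]
  simp only [Finset.mem_univ, if_true]
  have : (x j0) ^ 2 ≤ ∑ i, x i ^ 2 :=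
    Finset.single_le_sum (fun i _ => sq_nonneg (x i)) (Finset.mem_univ j0)
  nlinarith [sq_nonneg c]

lemma onb_inner_sum {b N : ℕ} {w : Fin N → EuclideanSpace ℝ (Fin b)} (hw : Orthonormal ℝ w)
    (ca cb : Fin N → ℝ) :
    (inner ℝ (∑ r, ca r • w r) (∑ r, cb r • w r) : ℝ) = ∑ r, ca r * cb r := by
  rw [sum_inner]
  refine Finset.sum_congr rfl fun r _ => ?_
  rw [inner_sum]
  simp_rw [real_inner_smul_left, real_inner_smul_right, orthonormal_iff_ite.mp hw]
  rw [Finset.sum_eq_single r]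
  · simp
  · intro r' _ hr'; simp [Ne.symm hr']
  · simp

section Spectral

variable {a b : ℕ}

lemma singVal_gram_le_sq (B : Matrix (Fin a) (Fin b) ℝ) (j : Fin b) :
    singVal (Bᵀ * B) ((j : ℕ) + 1) ≤ singVal B ((j : ℕ) + 1) ^ 2 := by
  classical
  set G : Matrix (Fin b) (Fin b) ℝ := Bᵀ * B with hGdef
  have hG : G.IsHermitian := by
    have := Matrix.isHermitian_conjTranspose_mul_self B
    rwa [real_conjTranspose_eq] at this
  set μ : Fin b → ℝ := hG.eigenvalues with hμdef
  have hμ0 : ∀ l, 0 ≤ μ l := by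
    intro l
    have hpsd : G.PosSemidef := by
      have := Matrix.posSemidef_conjTranspose_mul_self B
      rwa [real_conjTranspose_eq] at this
    exact hpsd.eigenvalues_nonneg l
  set V : Matrix (Fin b) (Fin b) ℝ := (hG.eigenvectorUnitary : Matrix (Fin b) (Fin b) ℝ)
    with hVdef
  have hV2 : V * Vᵀ = 1 := by
    have := (Matrix.mem_unitaryGroup_iff).mp hG.eigenvectorUnitary.2
    rwa [show star V = Vᵀ from real_conjTranspose_eq V] at this
  have hV1 : Vᵀ * V = 1 := by
    have := (Matrix.mem_unitaryGroup_iff').mp hG.eigenvectorUnitary.2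
    rwa [show star V = Vᵀ from real_conjTranspose_eq V] at this
  have hspec : G = V * Matrix.diagonal μ * Vᵀ := by
    have := hG.spectral_theorem
    rwa [show Matrix.diagonal (RCLike.ofReal ∘ μ) = Matrix.diagonal μ by
          ext l l'; simp [Matrix.diagonal], 
        Unitary.conjStarAlgAut_apply, show star V = Vᵀ from real_conjTranspose_eq V] at this
  -- sorting permutation
  set p : Equiv.Perm (Fin b) := (Fin.revPerm).trans (Tuple.sort μ) with hpdef
  have hanti : ∀ x y : Fin b, x ≤ y → μ (p y) ≤ μ (p x) := by
    intro x y hxy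
    exact Tuple.monotone_sort μ (Fin.rev_le_rev.mpr hxy)
  set t : ℝ := μ (p j) with htdef
  have ht0 : 0 ≤ t := hμ0 _
  -- Part (a): singVal G (j+1) ≤ t
  have parta : singVal G ((j : ℕ) + 1) ≤ t := by
    set d : Fin b → ℝ := fun l => if ((p.symm l : Fin b) : ℕ) < (j : ℕ) then μ l else 0
      with hddef
    set D : Matrix (Fin b) (Fin b) ℝ := V * Matrix.diagonal d * Vᵀ with hDdef
    have hrank : D.rank < (j : ℕ) + 1 := by
      have h1 : D.rank ≤ (Matrix.diagonal d).rank :=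
        le_trans (Matrix.rank_mul_le_left _ _) (Matrix.rank_mul_le_right _ _)
      have h2 : (Matrix.diagonal d).rank = Fintype.card {l // d l ≠ 0} :=
        Matrix.rank_diagonal d
      have h3 : Fintype.card {l // d l ≠ 0}
          ≤ Fintype.card {l : Fin b // ((p.symm l : Fin b) : ℕ) < (j : ℕ)} := by
        apply Fintype.card_subtype_mono
        intro l hl
        by_contra hc
        simp only [hddef, if_neg hc] at hl
        exact hl rfl
      have h4 : Fintype.card {l : Fin b // ((p.symm l : Fin b) : ℕ) < (j : ℕ)}
          = Fintype.card {r : Fin b // (r : ℕ) < (j : ℕ)} :=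
        Fintype.card_congr (Equiv.subtypeEquiv p.symm (fun l => Iff.rfl))
      have h5 : Fintype.card {r : Fin b // (r : ℕ) < (j : ℕ)} = (j : ℕ) := by
        rw [Fintype.card_congr
          (⟨fun x => (⟨x.1.1, x.2⟩ : Fin (j : ℕ)),
            fun y => ⟨⟨y.1, lt_trans y.2 j.2⟩, y.2⟩,
            fun x => Subtype.ext rfl, fun y => rfl⟩ :
            {r : Fin b // (r : ℕ) < (j : ℕ)} ≃ Fin (j : ℕ))]
        exact Fintype.card_fin _
      omega
    have he : ∀ l, |μ l - d l| ≤ t := by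
      intro l
      by_cases hl : ((p.symm l : Fin b) : ℕ) < (j : ℕ)
      · have hdl : d l = μ l := if_pos hl
        rw [hdl, sub_self, abs_zero]; exact ht0
      · have hdl : d l = 0 := if_neg hl
        rw [hdl, sub_zero]
        rw [abs_of_nonneg (hμ0 l)]
        have hjle : j ≤ p.symm l := by
          rw [Fin.le_def]; omega
        have := hanti j (p.symm l) hjle
        rwa [Equiv.apply_symm_apply] at this
    have hGD : G - D = V * Matrix.diagonal (fun l => μ l - d l) * Vᵀ := by
      rw [hspec, hDdef, ← Matrix.sub_mul, ← Matrix.mul_sub, ← Matrix.diagonal_sub]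
    calc singVal G ((j : ℕ) + 1) ≤ specNorm (G - D) := singVal_le G D hrank
      _ ≤ t := by rw [hGD]; exact specNorm_conj_diag_le hV1 hV2 _ ht0 he
  -- Part (b): sqrt t ≤ singVal B (j+1)
  have partb : Real.sqrt t ≤ singVal B ((j : ℕ) + 1) := by
    refine le_singVal B (by omega) fun D hD => ?_
    set w := hG.eigenvectorBasis with hwdef
    set f : Fin ((j : ℕ) + 1) → Fin b :=
      fun r => p ⟨r.1, lt_of_le_of_lt (Nat.lt_succ_iff.mp r.2) j.2⟩ with hfdef
    have hfinj : Function.Injective f := by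
      intro r r' h
      have h2 := p.injective h
      have : r.1 = r'.1 := by
        have := congrArg Fin.val h2
        simpa using this
      exact Fin.ext this
    set w' : Fin ((j : ℕ) + 1) → EuclideanSpace ℝ (Fin b) := fun r => w (f r) with hw'def
    have hw' : Orthonormal ℝ w' := w.orthonormal.comp f hfinj
    set S : Submodule ℝ (EuclideanSpace ℝ (Fin b)) := Submodule.span ℝ (Set.range w')
      with hSdef
    have hS : Module.finrank ℝ S = (j : ℕ) + 1 := by
      rw [finrank_span_eq_card hw'.linearIndependent]
      simp
    set K : Submodule ℝ (EuclideanSpace ℝ (Fin b)) :=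
      LinearMap.ker (Matrix.toEuclideanLin D) with hKdef
    have hrange : Module.finrank ℝ (LinearMap.range (Matrix.toEuclideanLin D)) = D.rank := by
      rw [Matrix.rank_eq_finrank_range_toLin D (PiLp.basisFun 2 ℝ (Fin a))
        (PiLp.basisFun 2 ℝ (Fin b)), Matrix.toEuclideanLin_eq_toLin]
    have hker : D.rank + Module.finrank ℝ K = b := by
      have := LinearMap.finrank_range_add_finrank_ker (Matrix.toEuclideanLin D)
      rw [hrange] at this
      rwa [finrank_euclideanSpace_fin] at this
    have hsum := Submodule.finrank_sup_add_finrank_inf_eq S K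
    have hle : Module.finrank ℝ ↥(S ⊔ K) ≤ b := by
      have := Submodule.finrank_le (S ⊔ K)
      rwa [finrank_euclideanSpace_fin] at this
    have hpos : 0 < Module.finrank ℝ ↥(S ⊓ K) := by omega
    have hne : S ⊓ K ≠ ⊥ := by
      intro hbot
      rw [hbot, finrank_bot] at hpos
      omega
    obtain ⟨x, hxmem, hx0⟩ := (Submodule.ne_bot_iff (S ⊓ K)).mp hne
    obtain ⟨hxS, hxK⟩ := Submodule.mem_inf.mp hxmem
    obtain ⟨c, hc⟩ := (Submodule.mem_span_range_iff_exists_fun ℝ).mp hxS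
    have heig : ∀ r, Matrix.toEuclideanLin G (w' r) = μ (f r) • w' r := by
      intro r
      apply PiLp.ext
      intro i
      rw [toEuclideanLin_apply_coord]
      have h := congrFun (hG.mulVec_eigenvectorBasis (f r)) i
      simpa using h
    have hGx : Matrix.toEuclideanLin G x = ∑ r, (c r * μ (f r)) • w' r := by
      rw [← hc, map_sum]
      simp_rw [_root_.map_smul, heig, smul_smul]
    have hip : (inner ℝ x (Matrix.toEuclideanLin G x) : ℝ) = ∑ r, c r * (c r * μ (f r)) := by
      rw [hGx, ← hc]
      exact onb_inner_sum hw' _ _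
    have hnx : ‖x‖ ^ 2 = ∑ r, c r * c r := by
      rw [← real_inner_self_eq_norm_sq, ← hc]
      exact onb_inner_sum hw' c c
    have hlow : t * ‖x‖ ^ 2 ≤ (inner ℝ x (Matrix.toEuclideanLin G x) : ℝ) := by
      rw [hip, hnx, Finset.mul_sum]
      refine Finset.sum_le_sum fun r _ => ?_
      have hμr : t ≤ μ (f r) := by
        refine hanti _ _ ?_
        rw [Fin.le_def]
        exact Nat.lt_succ_iff.mp r.2
      nlinarith [sq_nonneg (c r)]
    have hBx : (inner ℝ x (Matrix.toEuclideanLin G x) : ℝ)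
        = ‖Matrix.toEuclideanLin B x‖ ^ 2 := by
      rw [real_inner_comm, hGdef, ← inner_toEuclideanLin_mul B x x,
        real_inner_self_eq_norm_sq]
    have hDx : Matrix.toEuclideanLin (B - D) x = Matrix.toEuclideanLin B x := by
      rw [map_sub, LinearMap.sub_apply, LinearMap.mem_ker.mp hxK, sub_zero]
    have hub : ‖Matrix.toEuclideanLin B x‖ ≤ specNorm (B - D) * ‖x‖ := by
      rw [← hDx]
      exact norm_toEuclideanLin_apply_le _ _
    have hxpos : 0 < ‖x‖ := norm_pos_iff.mpr hx0
    have hsq : ‖Matrix.toEuclideanLin B x‖ ^ 2 ≤ specNorm (B - D) ^ 2 * ‖x‖ ^ 2 := by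
      have h2 := mul_self_le_mul_self (norm_nonneg (Matrix.toEuclideanLin B x)) hub
      calc ‖Matrix.toEuclideanLin B x‖ ^ 2
          = ‖Matrix.toEuclideanLin B x‖ * ‖Matrix.toEuclideanLin B x‖ := pow_two _
        _ ≤ (specNorm (B - D) * ‖x‖) * (specNorm (B - D) * ‖x‖) := h2
        _ = specNorm (B - D) ^ 2 * ‖x‖ ^ 2 := by ring
    have ht_le : t ≤ specNorm (B - D) ^ 2 := by
      rw [hBx] at hlow
      have hx2 : 0 < ‖x‖ ^ 2 := by positivity
      exact le_of_mul_le_mul_right (le_trans hlow hsq) hx2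
    refine le_of_sq_le_sq' (specNorm_nonneg _) ?_
    rwa [Real.sq_sqrt ht0]
  calc singVal (Bᵀ * B) ((j : ℕ) + 1) ≤ t := parta
    _ = Real.sqrt t ^ 2 := (Real.sq_sqrt ht0).symm
    _ ≤ singVal B ((j : ℕ) + 1) ^ 2 := by
        exact pow_le_pow_left₀ (Real.sqrt_nonneg t) partb 2

end Spectral


lemma gamma_lower {m n : ℕ} (A : Matrix (Fin m) (Fin n) ℝ)
    (P : Matrix (Fin m) (Fin (n + 1)) ℝ) (hP : Pᵀ * P = 1)
    (Q : Matrix (Fin n) (Fin n) ℝ) (hQ : Qᵀ * Q = 1)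
    (B : Matrix (Fin (n + 1)) (Fin n) ℝ)
    (hA : A = P * B * Qᵀ)
    (kk : ℕ) (hkk : kk ≤ n) (j0 : Fin n) (hj0 : kk ≤ (j0 : ℕ)) :
    ∑ i, (B i j0) ^ 2
      ≤ specNorm (A * (1 - colSub Q kk hkk * (colSub Q kk hkk)ᵀ)) ^ 2 := by
  classical
  set Qk := colSub Q kk hkk with hQkdef
  set W := A * (1 - Qk * Qkᵀ) with hWdef
  set v0 : Fin n → ℝ := Q *ᵥ Pi.single j0 1 with hv0def
  have hv0 : ∀ l, v0 l = Q l j0 := by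
    intro l
    rw [hv0def, Matrix.mulVec_single]
    exact mul_one _
  -- step 1 : Qkᵀ *ᵥ v0 = 0
  have h1 : Qkᵀ *ᵥ v0 = 0 := by
    funext r
    have : (Qkᵀ *ᵥ v0) r = (Qᵀ * Q) ⟨r.1, lt_of_lt_of_le r.2 hkk⟩ j0 := by
      rw [Matrix.mulVec, dotProduct, Matrix.mul_apply]
      refine Finset.sum_congr rfl fun l _ => ?_
      rw [hv0 l]
      rfl
    rw [this, hQ, Matrix.one_apply_ne]
    · rfl
    · intro hcon
      have : r.1 = (j0 : ℕ) := congrArg Fin.val hcon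
      omega
  -- step 2 : W *ᵥ v0 = P *ᵥ (B *ᵥ Pi.single j0 1)
  have h2 : W *ᵥ v0 = P *ᵥ (B *ᵥ Pi.single j0 1) := by
    have hW2 : W = A - A * (Qk * Qkᵀ) := by
      rw [hWdef, Matrix.mul_sub, Matrix.mul_one]
    rw [hW2, Matrix.sub_mulVec]
    have h3 : (A * (Qk * Qkᵀ)) *ᵥ v0 = 0 := by
      rw [← Matrix.mulVec_mulVec, ← Matrix.mulVec_mulVec, h1, Matrix.mulVec_zero,
        Matrix.mulVec_zero]
    rw [h3, sub_zero, hA]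
    rw [hv0def, Matrix.mulVec_mulVec, Matrix.mul_assoc (P * B) Qᵀ Q, hQ, Matrix.mul_one,
      ← Matrix.mulVec_mulVec]
  -- norms
  set e : EuclideanSpace ℝ (Fin n) := (WithLp.equiv 2 (Fin n → ℝ)).symm (Pi.single j0 1)
    with hedef
  set x : EuclideanSpace ℝ (Fin n) := (WithLp.equiv 2 (Fin n → ℝ)).symm v0 with hxdef
  have hxQ : x = Matrix.toEuclideanLin Q e := by
    apply PiLp.ext
    intro i
    rw [toEuclideanLin_apply_coord]
    rfl
  have hxnorm : ‖x‖ = 1 := by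
    rw [hxQ, norm_toEuclideanLin_of_orthonormal hQ]
    have : ‖e‖ ^ 2 = 1 := by
      rw [sq_norm_euclid]
      have : ∀ i : Fin n, (e i) ^ 2 = if i = j0 then 1 else 0 := by
        intro i
        by_cases hi : i = j0
        · subst hi; simp [hedef, Pi.single_apply]
        · simp [hedef, Pi.single_apply, hi]
      simp_rw [this]
      simp
    nlinarith [norm_nonneg e]
  set y : EuclideanSpace ℝ (Fin (n + 1)) := (WithLp.equiv 2 (Fin (n + 1) → ℝ)).symm
    (B *ᵥ Pi.single j0 1) with hydef
  have hWx : Matrix.toEuclideanLin W x = Matrix.toEuclideanLin P y := by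
    apply PiLp.ext
    intro i
    rw [toEuclideanLin_apply_coord, toEuclideanLin_apply_coord]
    have := congrFun h2 i
    exact this
  have hnormWx : ‖Matrix.toEuclideanLin W x‖ ^ 2 = ∑ i, (B i j0) ^ 2 := by
    rw [hWx, norm_toEuclideanLin_of_orthonormal hP, sq_norm_euclid]
    refine Finset.sum_congr rfl fun i _ => ?_
    have : y i = B i j0 := by
      show (B *ᵥ Pi.single j0 1) i = B i j0
      rw [Matrix.mulVec_single]
      exact mul_one _
    rw [this]
  have hle : ‖Matrix.toEuclideanLin W x‖ ≤ specNorm W := by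
    have := norm_toEuclideanLin_apply_le W x
    rwa [hxnorm, mul_one] at this
  rw [← hnormWx]
  exact pow_le_pow_left₀ (norm_nonneg _) hle 2

lemma sum_col_sq {n : ℕ} (α β : Fin n → ℝ) (B : Matrix (Fin (n + 1)) (Fin n) ℝ)
    (hB : ∀ (i : Fin (n + 1)) (j : Fin n),
      B i j = if (i : ℕ) = (j : ℕ) then α j
        else if (i : ℕ) = (j : ℕ) + 1 then β j else 0)
    (j0 : Fin n) :
    ∑ i, (B i j0) ^ 2 = α j0 ^ 2 + β j0 ^ 2 := by
  classical
  set a0 : Fin (n + 1) := ⟨j0.1, by omega⟩ with ha0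
  set b0 : Fin (n + 1) := ⟨j0.1 + 1, by omega⟩ with hb0
  have hne : a0 ≠ b0 := by
    intro h
    have := congrArg Fin.val h
    simp [ha0, hb0] at this
  have hterm : ∀ i : Fin (n + 1), (B i j0) ^ 2
      = (if i = a0 then α j0 ^ 2 else 0) + (if i = b0 then β j0 ^ 2 else 0) := by
    intro i
    rw [hB]
    by_cases h1 : (i : ℕ) = (j0 : ℕ)
    · have hia : i = a0 := Fin.ext h1
      have hib : i ≠ b0 := by rw [hia]; exact hne
      rw [if_pos h1, if_pos hia, if_neg hib, add_zero]
    · have hia : i ≠ a0 := fun h => h1 (congrArg Fin.val h)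
      rw [if_neg h1, if_neg hia, zero_add]
      by_cases h2 : (i : ℕ) = (j0 : ℕ) + 1
      · have hib : i = b0 := Fin.ext h2
        rw [if_pos h2, if_pos hib]
      · have hib : i ≠ b0 := fun h => h2 (congrArg Fin.val h)
        rw [if_neg h2, if_neg hib]
        norm_num
  simp_rw [hterm]
  rw [Finset.sum_add_distrib, Finset.sum_ite_eq' Finset.univ a0,
    Finset.sum_ite_eq' Finset.univ b0]
  simp


def inclJ (k : ℕ) : Matrix (Fin (k + 1)) (Fin k) ℝ :=
  Matrix.of fun i j => if (i : ℕ) = (j : ℕ) then 1 else 0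

def cornerE (k : ℕ) (c : ℝ) : Matrix (Fin (k + 1)) (Fin k) ℝ :=
  Matrix.of fun i j => if (i : ℕ) = k ∧ (j : ℕ) = k - 1 then c else 0

lemma inclJ_orthonormal (k : ℕ) : (inclJ k)ᵀ * inclJ k = 1 := by
  ext r s
  rw [Matrix.mul_apply, Matrix.one_apply]
  rw [Finset.sum_eq_single (⟨r.1, by omega⟩ : Fin (k + 1))]
  · rw [Matrix.transpose_apply]
    show (if (r : ℕ) = (r : ℕ) then (1:ℝ) else 0) * (if (r : ℕ) = (s : ℕ) then 1 else 0) = _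
    rw [if_pos rfl, one_mul]
    by_cases hrs : r = s
    · subst hrs; rw [if_pos rfl, if_pos rfl]
    · have h1 : ¬ (r : ℕ) = (s : ℕ) := fun h => hrs (Fin.ext h)
      rw [if_neg h1, if_neg hrs]
  · intro l _ hl
    rw [Matrix.transpose_apply]
    show (if (l : ℕ) = (r : ℕ) then (1:ℝ) else 0) * _ = 0
    have : ¬ (l : ℕ) = (r : ℕ) := fun h => hl (Fin.ext h)
    rw [if_neg this, zero_mul]
  · simp

lemma specNorm_cornerE_le {k : ℕ} (hk1 : 1 ≤ k) {c : ℝ} (hc : 0 ≤ c) :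
    specNorm (cornerE k c) ≤ c := by
  have heq : cornerE k c = Matrix.of fun i j =>
      if i = (⟨k, by omega⟩ : Fin (k + 1)) ∧ j = (⟨k - 1, by omega⟩ : Fin k) then c else 0 := by
    ext r s
    show (if (r : ℕ) = k ∧ (s : ℕ) = k - 1 then c else 0) = _
    by_cases h : (r : ℕ) = k ∧ (s : ℕ) = k - 1
    · rw [if_pos h]
      exact (if_pos ⟨Fin.ext h.1, Fin.ext h.2⟩).symm
    · rw [if_neg h]
      refine (if_neg ?_).symm
      rintro ⟨h1, h2⟩
      exact h ⟨congrArg Fin.val h1, congrArg Fin.val h2⟩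
  rw [heq]
  have := specNorm_single_entry_le (⟨k, by omega⟩ : Fin (k + 1)) (⟨k - 1, by omega⟩ : Fin k) c
  rwa [abs_of_nonneg hc] at this

lemma key_ineq {k : ℕ} (hk1 : 1 ≤ k) (Bk Mk : Matrix (Fin (k + 1)) (Fin k) ℝ) (c : ℝ)
    (hc : 0 ≤ c) (hdec : Mk = inclJ k * (Bkᵀ * Bk) + cornerE k c) (i : Fin k) :
    singVal Mk ((i : ℕ) + 1) ≤ singVal Bk ((i : ℕ) + 1) ^ 2 + c := by
  calc singVal Mk ((i : ℕ) + 1)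
      = singVal (inclJ k * (Bkᵀ * Bk) + cornerE k c) ((i : ℕ) + 1) := by rw [hdec]
    _ ≤ singVal (inclJ k * (Bkᵀ * Bk)) ((i : ℕ) + 1) + specNorm (cornerE k c) :=
        singVal_add_le _ _ (by omega)
    _ ≤ singVal (Bkᵀ * Bk) ((i : ℕ) + 1) + specNorm (cornerE k c) := by
        have := singVal_mul_le_of_orthonormal (inclJ_orthonormal k) (Bkᵀ * Bk)
          (j := (i : ℕ) + 1) (by omega)
        linarith
    _ ≤ singVal Bk ((i : ℕ) + 1) ^ 2 + specNorm (cornerE k c) := by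
        have := singVal_gram_le_sq Bk i
        linarith
    _ ≤ singVal Bk ((i : ℕ) + 1) ^ 2 + c := by
        have := specNorm_cornerE_le hk1 hc
        linarith


/-- `(θ̃_i^{(k)})² < (θ_i^{(k)})² + γ_k^{lsqr} γ_{k-1}^{lsqr}`, where
`(θ̃_i^{(k)})²` are the singular values of `M_k = (B_kᵀB_k; α_{k+1}β_{k+1}(e_k)ᵀ)`. -/
theorem lsmr_singularValues_squared_upper_bound
    (m n : ℕ) (hn : 2 ≤ n) (hmn : n < m)
    (A : Matrix (Fin m) (Fin n) ℝ)
    (P : Matrix (Fin m) (Fin (n + 1)) ℝ) (hP : Pᵀ * P = 1)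
    (Q : Matrix (Fin n) (Fin n) ℝ) (hQ : Qᵀ * Q = 1)
    (α : Fin n → ℝ) (hα : ∀ i, 0 < α i)
    (β : Fin n → ℝ) (hβ : ∀ i, 0 < β i)
    (B : Matrix (Fin (n + 1)) (Fin n) ℝ)
    (hB : ∀ (i : Fin (n + 1)) (j : Fin n),
      B i j = if (i : ℕ) = (j : ℕ) then α j
        else if (i : ℕ) = (j : ℕ) + 1 then β j else 0)
    (hA : A = P * B * Qᵀ)
    (σ : Fin n → ℝ) (hσpos : ∀ i, 0 < σ i)
    (hσstrict : ∀ i j : Fin n, i < j → σ j < σ i)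
    (hσ : ∀ i : Fin n, σ i = singVal A ((i : ℕ) + 1))
    (k : ℕ) (hk1 : 1 ≤ k) (hk2 : k ≤ n - 1)
    (Mk : Matrix (Fin (k + 1)) (Fin k) ℝ)
    (hMk : ∀ (i : Fin (k + 1)) (j : Fin k),
      Mk i j = if h : (i : ℕ) < k then
          ((subUL B (k + 1) k (by omega) (by omega))ᵀ *
            subUL B (k + 1) k (by omega) (by omega)) ⟨(i : ℕ), h⟩ j
        else if (j : ℕ) = k - 1 then
          B ⟨k, by omega⟩ ⟨k, by omega⟩ * B ⟨k, by omega⟩ ⟨k - 1, by omega⟩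
        else 0)
    :
    ∀ i : Fin k,
      singVal Mk ((i : ℕ) + 1) <
        singVal (subUL B (k + 1) k (by omega) (by omega)) ((i : ℕ) + 1) ^ 2 +
          specNorm (A * (1 - colSub Q k (by omega) * (colSub Q k (by omega))ᵀ)) *
            specNorm (A * (1 - colSub Q (k - 1) (by omega) * (colSub Q (k - 1) (by omega))ᵀ)) := by
  classical
  intro i
  have hkn : k < n := by omega
  have hk1n : k - 1 < n := by omega
  -- the corner value
  have hc_eq : B (⟨k, by omega⟩ : Fin (n + 1)) (⟨k, by omega⟩ : Fin n) *
      B (⟨k, by omega⟩ : Fin (n + 1)) (⟨k - 1, by omega⟩ : Fin n)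
      = α ⟨k, hkn⟩ * β ⟨k - 1, hk1n⟩ := by
    rw [hB, hB]
    rw [if_pos (show k = k from rfl)]
    rw [if_neg (show ¬ (k = k - 1) by omega)]
    rw [if_pos (show k = k - 1 + 1 by omega)]
  have hc_pos : (0:ℝ) < α ⟨k, hkn⟩ * β ⟨k - 1, hk1n⟩ := mul_pos (hα _) (hβ _)
  -- decomposition of Mk
  have hdec : Mk = inclJ k * ((subUL B (k + 1) k (by omega) (by omega))ᵀ *
      subUL B (k + 1) k (by omega) (by omega)) + cornerE k (α ⟨k, hkn⟩ * β ⟨k - 1, hk1n⟩) := by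
    ext r s
    rw [Matrix.add_apply, Matrix.mul_apply, hMk]
    have hcE : ∀ (r : Fin (k+1)) (s : Fin k), cornerE k (α ⟨k, hkn⟩ * β ⟨k - 1, hk1n⟩) r s
        = if (r : ℕ) = k ∧ (s : ℕ) = k - 1 then α ⟨k, hkn⟩ * β ⟨k - 1, hk1n⟩ else 0 :=
      fun _ _ => rfl
    have hJapp : ∀ (l : Fin (k + 1)) (r : Fin k),
        inclJ k l r = if (l : ℕ) = (r : ℕ) then 1 else 0 := fun _ _ => rfl
    by_cases hr : (r : ℕ) < k
    · rw [dif_pos hr, hcE]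
      rw [if_neg (by omega), add_zero]
      rw [Finset.sum_eq_single (⟨r.1, hr⟩ : Fin k)]
      · rw [hJapp, if_pos rfl, one_mul]
      · intro l _ hl
        rw [hJapp, if_neg, zero_mul]
        intro h
        exact hl (Fin.ext h.symm)
      · simp
    · rw [dif_neg hr, hcE]
      have hrk : (r : ℕ) = k := by
        have := r.2
        omega
      have hsum0 : (∑ l, inclJ k r l *
          ((subUL B (k + 1) k (by omega) (by omega))ᵀ *
            subUL B (k + 1) k (by omega) (by omega)) l s) = 0 := by
        apply Finset.sum_eq_zero
        intro l _
        rw [hJapp, if_neg, zero_mul]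
        have := l.2
        omega
      rw [hsum0, zero_add]
      by_cases hs : (s : ℕ) = k - 1
      · rw [if_pos hs, if_pos ⟨hrk, hs⟩, hc_eq]
      · rw [if_neg hs, if_neg (by tauto)]
  -- gamma bounds
  have hg1 : α ⟨k, hkn⟩ ^ 2 + β ⟨k, hkn⟩ ^ 2
      ≤ specNorm (A * (1 - colSub Q k (by omega) * (colSub Q k (by omega))ᵀ)) ^ 2 := by
    rw [← sum_col_sq α β B hB ⟨k, hkn⟩]
    exact gamma_lower A P hP Q hQ B hA k (by omega) ⟨k, hkn⟩ (le_refl _)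
  have hg2 : α ⟨k - 1, hk1n⟩ ^ 2 + β ⟨k - 1, hk1n⟩ ^ 2
      ≤ specNorm (A * (1 - colSub Q (k - 1) (by omega) * (colSub Q (k - 1) (by omega))ᵀ)) ^ 2 := by
    rw [← sum_col_sq α β B hB ⟨k - 1, hk1n⟩]
    exact gamma_lower A P hP Q hQ B hA (k - 1) (by omega) ⟨k - 1, hk1n⟩ (le_refl _)
  have hγ1nn : 0 ≤ specNorm (A * (1 - colSub Q k (by omega) * (colSub Q k (by omega))ᵀ)) :=
    specNorm_nonneg _
  have hγ2nn : 0 ≤ specNorm (A * (1 - colSub Q (k - 1) (by omega) *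
      (colSub Q (k - 1) (by omega))ᵀ)) := specNorm_nonneg _
  have hcγ : α ⟨k, hkn⟩ * β ⟨k - 1, hk1n⟩ <
      specNorm (A * (1 - colSub Q k (by omega) * (colSub Q k (by omega))ᵀ)) *
        specNorm (A * (1 - colSub Q (k - 1) (by omega) * (colSub Q (k - 1) (by omega))ᵀ)) := by
    have h1 : α ⟨k, hkn⟩ <
        specNorm (A * (1 - colSub Q k (by omega) * (colSub Q k (by omega))ᵀ)) := by
      nlinarith [hg1, mul_pos (hβ ⟨k, hkn⟩) (hβ ⟨k, hkn⟩), hα ⟨k, hkn⟩, hγ1nn]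
    have h2 : β ⟨k - 1, hk1n⟩ ≤
        specNorm (A * (1 - colSub Q (k - 1) (by omega) * (colSub Q (k - 1) (by omega))ᵀ)) := by
      nlinarith [hg2, mul_pos (hα ⟨k - 1, hk1n⟩) (hα ⟨k - 1, hk1n⟩), hβ ⟨k - 1, hk1n⟩, hγ2nn]
    have h3 := mul_lt_mul_of_pos_right h1 (hβ ⟨k - 1, hk1n⟩)
    have h4 := mul_le_mul_of_nonneg_left h2 hγ1nn
    linarith
  have hmain := key_ineq hk1 (subUL B (k + 1) k (by omega) (by omega)) Mk
    (α ⟨k, hkn⟩ * β ⟨k - 1, hk1n⟩) (le_of_lt hc_pos) hdec i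
  linarith
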